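/- Suppose a stable price cycle satisfies the market clearing condition λ_d·(t₂ − t₀) = ∫_{t₁}^{t₂} λ_r·F̄(p(t) + c_r·η(n(t))) dt, where t₂ − t₀ = ((ℓ₋+ℓ₊)/ℓ₊)·(t₂ − t₁). Then the minimum trip price p̲ in the cycle satisfies p̲ ≤ F̄^{−1}((ℓ₋ + ℓ₊)·λ_d / (ℓ₊·λ_r)). Consequently, if the platform imposes a price floor p_floor > F̄^{−1}((ℓ₋ + ℓ₊)·λ_d / (ℓ₊·λ_r)), then no stable price cycle exists. -/
import Mathlib


/-- Price floors break cycles: under market clearing, the minimum cycle price satisfies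
`p̲ ≤ F̄⁻¹((ℓ₋+ℓ₊)λ_d/(ℓ₊ λ_r))`; hence any price floor strictly above this value rules
out stable price cycles. -/
theorem stmt_9 (F Finv : ℝ → ℝ)
    (hanti : StrictAnti F) (hFinv : ∀ y, F (Finv y) = y)
    (lamd lamr lp lm cr : ℝ)
    (hlamd : 0 < lamd) (hlamr : 0 < lamr) (hlp : 0 < lp) (hlm : 0 < lm) (hcr : 0 ≤ cr)
    (eta n p : ℝ → ℝ) (heta : ∀ x, 0 ≤ eta x)
    (t0 t1 t2 : ℝ) (h01 : t0 < t1) (h12 : t1 < t2)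
    (hratio : t2 - t0 = ((lm + lp) / lp) * (t2 - t1))
    (pmin : ℝ) (hpmin : ∀ t, pmin ≤ p t)
    (hint : IntervalIntegrable (fun t => lamr * F (p t + cr * eta (n t)))
      MeasureTheory.volume t1 t2)
    (hclear : lamd * (t2 - t0) = ∫ t in t1..t2, lamr * F (p t + cr * eta (n t))) :
    pmin ≤ Finv ((lm + lp) * lamd / (lp * lamr)) ∧
      ∀ pfloor : ℝ, Finv ((lm + lp) * lamd / (lp * lamr)) < pfloor → ¬ pfloor ≤ pmin := by
  have hF : ∀ t, lamr * F (p t + cr * eta (n t)) ≤ lamr * F pmin := by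
    intro t
    have h1 : pmin ≤ p t + cr * eta (n t) := by
      have := mul_nonneg hcr (heta (n t))
      linarith [hpmin t]
    exact mul_le_mul_of_nonneg_left (hanti.antitone h1) hlamr.le
  have hIle : (∫ t in t1..t2, lamr * F (p t + cr * eta (n t))) ≤
      ∫ _t in t1..t2, lamr * F pmin := by
    apply intervalIntegral.integral_mono_on h12.le hint (intervalIntegrable_const)
    exact fun t _ => hF t
  rw [intervalIntegral.integral_const, smul_eq_mul] at hIle
  have hkey : (lm + lp) * lamd / (lp * lamr) ≤ F pmin := by
    rw [div_le_iff₀ (by positivity)]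
    have h1 : lamd * (((lm + lp) / lp) * (t2 - t1)) ≤ (t2 - t1) * (lamr * F pmin) := by
      rw [← hratio, hclear]; exact hIle
    have h2 : 0 < t2 - t1 := by linarith
    have h3 : lamd * ((lm + lp) / lp) ≤ lamr * F pmin :=
      le_of_mul_le_mul_right (by nlinarith) h2
    have h4 : lamd * ((lm + lp) / lp) * lp ≤ lamr * F pmin * lp :=
      mul_le_mul_of_nonneg_right h3 hlp.le
    rw [mul_assoc, div_mul_cancel₀ _ hlp.ne'] at h4
    nlinarith
  have hmain : pmin ≤ Finv ((lm + lp) * lamd / (lp * lamr)) := by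
    by_contra h
    push_neg at h
    have := hanti h
    rw [hFinv] at this
    linarith
  exact ⟨hmain, fun pfloor hlt hle => absurd (le_trans hle hmain) (not_le.mpr hlt)⟩
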